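/- Let n ≥ 1, let I_1,…,I_n be real numbers and let c_{ij} be real numbers for all 1 ≤ i < j ≤ n. Define b_1,…,b_n by the recurrence b_j = I_j + Σ_{i<j} b_i · c_{ij}. Then b_n = I_n + Σ_{k=1}^{n-1} Σ_{1 ≤ i_1 < i_2 < ⋯ < i_k ≤ n-1} I_{i_1} · c_{i_1 i_2} · c_{i_2 i_3} ⋯ c_{i_{k-1} i_k} · c_{i_k n}. -/

import Mathlib

open scoped BigOperators

/-- `chainProd c n [i₁, …, i_k] = c i₁ i₂ ⋯ c i_{k-1} i_k · c i_k n`: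
the product of the coefficients along the chain `i₁ < ⋯ < i_k < n`. -/
def chainProd (c : ℕ → ℕ → ℝ) (n : ℕ) : List ℕ → ℝ
  | [] => 1
  | [i] => c i n
  | i :: j :: rest => c i j * chainProd c n (j :: rest)

lemma chainProd_concat (c : ℕ → ℕ → ℝ) (n m : ℕ) :
    ∀ l : List ℕ, chainProd c n (l ++ [m]) = chainProd c m l * c m n
  | [] => by simp [chainProd]
  | [i] => by simp [chainProd]
  | i :: j :: rest => by
      have h := chainProd_concat c n m (j :: rest)
      simp only [List.cons_append, List.append_eq, chainProd] at h ⊢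
      rw [h]; ring

lemma sort_insert_max {a : ℕ} {s : Finset ℕ} (h1 : ∀ b ∈ s, b ≤ a) (h2 : a ∉ s) :
    (insert a s).sort (· ≤ ·) = s.sort (· ≤ ·) ++ [a] := by
  have hnd : (s.sort (· ≤ ·) ++ [a]).Nodup := by
    refine List.Nodup.append (Finset.sort_nodup _ _) (List.nodup_singleton a) ?_
    intro x hx hx'
    simp only [List.mem_singleton] at hx'
    exact h2 (hx' ▸ (Finset.mem_sort _).1 hx)
  have hts : (s.sort (· ≤ ·) ++ [a]).toFinset = insert a s := by
    ext x
    simp [List.mem_toFinset, Or.comm, Finset.mem_sort]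
  have hsorted : (s.sort (· ≤ ·) ++ [a]).Pairwise (· ≤ ·) := by
    refine List.pairwise_append.2 ⟨Finset.pairwise_sort _ _, List.pairwise_singleton _ _, ?_⟩
    intro x hx y hy
    simp only [List.mem_singleton] at hy
    exact hy ▸ h1 x ((Finset.mem_sort _).1 hx)
  have := (List.toFinset_sort (· ≤ ·) hnd).2 hsorted
  rw [hts] at this
  exact this

/-- Decompose the nonempty subsets of `Icc 1 N` by their maximal element. -/
lemma split_powerset (g : Finset ℕ → ℝ) :
    ∀ N : ℕ, ∑ S ∈ (Finset.Icc 1 N).powerset.filter (fun S => S.Nonempty), g S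
      = ∑ m ∈ Finset.Icc 1 N, ∑ T ∈ (Finset.Icc 1 (m - 1)).powerset, g (insert m T)
  | 0 => by simp [Finset.filter_singleton]
  | (N + 1) => by
      have hins : Finset.Icc 1 (N + 1) = insert (N + 1) (Finset.Icc 1 N) := by
        rw [← Finset.Ico_add_one_right_eq_Icc, ← Finset.Ico_add_one_right_eq_Icc]
        exact Nat.Ico_succ_right_eq_insert_Ico (Nat.succ_le_succ (Nat.zero_le N))
      have hnm : (N + 1) ∉ Finset.Icc 1 N := by simp
      have key : ∀ (P : Finset ℕ) (f : Finset ℕ → ℝ),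
          ∑ S ∈ P.powerset.filter (fun S => S.Nonempty), f S
            = ∑ S ∈ P.powerset, (if S.Nonempty then f S else 0) :=
        fun P f => Finset.sum_filter _ _
      rw [hins, key, Finset.sum_powerset_insert hnm, Finset.sum_insert hnm]
      have h2 : ∑ T ∈ (Finset.Icc 1 N).powerset,
          (if (insert (N + 1) T).Nonempty then g (insert (N + 1) T) else 0)
          = ∑ T ∈ (Finset.Icc 1 (N + 1 - 1)).powerset, g (insert (N + 1) T) := by
        simp [Finset.insert_nonempty]
      rw [h2, ← key, split_powerset g N]
      ring

theorem sum_nonempty_subsets (I : ℕ → ℝ) (c : ℕ → ℕ → ℝ) (b : ℕ → ℝ) (n : ℕ)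
    (hb : ∀ j, 1 ≤ j → j ≤ n → b j = I j + ∑ i ∈ Finset.Ico 1 j, b i * c i j) :
    ∀ m, 1 ≤ m → m ≤ n →
      b m = I m + ∑ S ∈ (Finset.Icc 1 (m - 1)).powerset.filter (fun S => S.Nonempty),
        I ((S.sort (· ≤ ·)).headI) * chainProd c m (S.sort (· ≤ ·)) := by
  intro m
  induction m using Nat.strong_induction_on with
  | _ m ih =>
    intro hm1 hmn
    rw [hb m hm1 hmn]
    congr 1
    rw [split_powerset]
    have hico : Finset.Ico 1 m = Finset.Icc 1 (m - 1) := by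
      rw [← Finset.Ico_add_one_right_eq_Icc, Nat.sub_add_cancel hm1]
    rw [hico]
    refine Finset.sum_congr rfl fun i hi => ?_
    obtain ⟨hi1, hi2⟩ := Finset.mem_Icc.1 hi
    have him : i < m := lt_of_le_of_lt hi2 (Nat.sub_lt (lt_of_lt_of_le Nat.zero_lt_one hm1) Nat.zero_lt_one)
    -- rewrite each summand using sort_insert_max and chainProd_concat
    have hterm : ∀ T ∈ (Finset.Icc 1 (i - 1)).powerset,
        I (((insert i T).sort (· ≤ ·)).headI) * chainProd c m ((insert i T).sort (· ≤ ·))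
          = (if T.Nonempty then I ((T.sort (· ≤ ·)).headI) * chainProd c i (T.sort (· ≤ ·)) else I i) * c i m := by
      intro T hT
      have hTsub := Finset.mem_powerset.1 hT
      have hle : ∀ b ∈ T, b ≤ i := fun x hx =>
        le_trans (Finset.mem_Icc.1 (hTsub hx)).2 (Nat.sub_le i 1)
      have hnotmem : i ∉ T := by
        intro hiT
        have := (Finset.mem_Icc.1 (hTsub hiT)).2
        have h1i : 1 ≤ i := hi1
        omega
      rw [sort_insert_max hle hnotmem, chainProd_concat]
      rcases T.eq_empty_or_nonempty with h | h
      · subst h; simp [chainProd]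
      · have hne : T.sort (· ≤ ·) ≠ [] := by
          intro hl
          have hlen := Finset.length_sort (α := ℕ) (· ≤ ·) (s := T)
          rw [hl] at hlen
          exact h.ne_empty (Finset.card_eq_zero.1 hlen.symm)
        rw [if_pos h]
        cases hl : T.sort (· ≤ ·) with
        | nil => exact absurd hl hne
        | cons x xs => simp [List.headI]; ring
    rw [Finset.sum_congr rfl hterm, ← Finset.sum_mul]
    congr 1
    -- split the powerset sum into the empty set and the nonempty sets
    have hsplit := Finset.sum_filter_add_sum_filter_not
      (Finset.Icc 1 (i - 1)).powerset (fun T => T.Nonempty)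
      (fun T => if T.Nonempty then I ((T.sort (· ≤ ·)).headI) * chainProd c i (T.sort (· ≤ ·)) else I i)
    have hempty : ((Finset.Icc 1 (i - 1)).powerset.filter (fun T => ¬ T.Nonempty)) = {∅} := by
      ext T
      simp [Finset.not_nonempty_iff_eq_empty]
      intro h; subst h; exact Finset.empty_subset _
    rw [← hsplit, hempty, Finset.sum_singleton, if_neg (by simp)]
    have hres := ih i him hi1 (le_trans (le_of_lt him) hmn)
    rw [hres]
    rw [add_comm]
    congr 1
    refine Finset.sum_congr rfl fun T hT => ?_
    rw [if_pos (Finset.mem_filter.1 hT).2]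

theorem bound_closed_form (n : ℕ) (hn : 1 ≤ n) (I : ℕ → ℝ) (c : ℕ → ℕ → ℝ) (b : ℕ → ℝ)
    (hb : ∀ j, 1 ≤ j → j ≤ n → b j = I j + ∑ i ∈ Finset.Ico 1 j, b i * c i j) :
    b n = I n + ∑ k ∈ Finset.Icc 1 (n - 1),
      ∑ S ∈ (Finset.Icc 1 (n - 1)).powerset.filter (fun S => S.card = k),
        I ((S.sort (· ≤ ·)).headI) * chainProd c n (S.sort (· ≤ ·)) := by
  rw [sum_nonempty_subsets I c b n hb n hn le_rfl]
  congr 1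
  rw [Finset.sum_fiberwise_eq_sum_filter]
  refine Finset.sum_congr ?_ fun S _ => rfl
  refine Finset.filter_congr fun S hS => ?_
  have hsub := Finset.mem_powerset.1 hS
  have hcard : S.card ≤ n - 1 := by
    calc S.card ≤ (Finset.Icc 1 (n - 1)).card := Finset.card_le_card hsub
    _ = n - 1 := by rw [Nat.card_Icc]; omega
  simp only [Finset.mem_Icc]
  constructor
  · intro h; exact ⟨Finset.card_pos.2 h, hcard⟩
  · intro h; exact Finset.card_pos.1 h.1
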